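/- For every integer m ≥ 1 and every integer ℓ ≥ 0, the number of barred preferential arrangements satisfies 2·m·r_{m,ℓ} = r_{m-1, ℓ+1} + m·r_{m-1, ℓ}. -/

import Mathlib

set_option linter.unusedSectionVars false
set_option maxHeartbeats 1000000


/-- `IsBPA m ℓ f` : `f` encodes a barred preferential arrangement of `[ℓ]` with `m` bars.
Each element of `[ℓ]` is assigned a section (one of the `m + 1` sections determined by the
`m` bars) together with a rank inside its section (ties are allowed: elements of the same
section with the same rank form a block); within each section the set of ranks actually used
must be an initial segment `{0, …, t-1}`, so that `f` determines, for each section, an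
ordered partition of the elements assigned to it into nonempty blocks. -/
def IsBPA (m ℓ : ℕ) (f : Fin ℓ → Fin (m + 1) × Fin ℓ) : Prop :=
  ∀ x : Fin ℓ, ∀ r : Fin ℓ, r < (f x).2 → ∃ y : Fin ℓ, (f y).1 = (f x).1 ∧ (f y).2 = r

instance (m ℓ : ℕ) : DecidablePred (IsBPA m ℓ) := fun f => by unfold IsBPA; infer_instance

/-- `bpa m ℓ` : the number of barred preferential arrangements of `[ℓ]` with `m` bars.
In particular `bpa 0 ℓ` is the number of preferential arrangements of `[ℓ]`
(the Fubini / ordered Bell number `r_ℓ`). -/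
def bpa (m ℓ : ℕ) : ℕ :=
  Fintype.card { f : Fin ℓ → Fin (m + 1) × Fin ℓ // IsBPA m ℓ f }


def IsBPAG (m : ℕ) {α : Type} (N : ℕ) (f : α → Fin (m + 1) × Fin N) : Prop :=
  ∀ x : α, ∀ r : Fin N, r < (f x).2 → ∃ y : α, (f y).1 = (f x).1 ∧ (f y).2 = r

noncomputable def bpaG (m : ℕ) (α : Type) [Fintype α] (N : ℕ) : ℕ :=
  Nat.card { f : α → Fin (m + 1) × Fin N // IsBPAG m N f }

/-- rank bound -/
theorem IsBPAG.rank_lt {m : ℕ} {α : Type} [Fintype α] {N : ℕ}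
    {f : α → Fin (m + 1) × Fin N} (hf : IsBPAG m N f) (x : α) :
    ((f x).2 : ℕ) < Fintype.card α := by
  have h : ∀ i : Fin (((f x).2 : ℕ) + 1), ∃ y : α,
      (f y).1 = (f x).1 ∧ ((f y).2 : ℕ) = (i : ℕ) := by
    intro i
    rcases lt_or_eq_of_le (Nat.lt_succ_iff.mp i.isLt) with h | h
    · obtain ⟨y, hy1, hy2⟩ := hf x ⟨(i : ℕ), lt_trans h (f x).2.isLt⟩ (by
        simp [Fin.lt_def, h])
      exact ⟨y, hy1, by simp [hy2]⟩
    · exact ⟨x, rfl, h.symm⟩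
  choose g hg1 hg2 using h
  have hginj : Function.Injective g := by
    intro a b hab
    have := (hg2 a).symm.trans (hab ▸ hg2 b)
    exact Fin.ext this
  have := Fintype.card_le_of_injective g hginj
  simpa using this

/-- domain transport -/
def bpaEquivDom {m N : ℕ} {α β : Type} (e : α ≃ β) :
    { f : α → Fin (m + 1) × Fin N // IsBPAG m N f } ≃
    { f : β → Fin (m + 1) × Fin N // IsBPAG m N f } where
  toFun := fun ⟨f, hf⟩ => ⟨f ∘ e.symm, by
    intro x r hr
    obtain ⟨y, hy1, hy2⟩ := hf (e.symm x) r hr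
    exact ⟨e y, by simpa using ⟨hy1, hy2⟩⟩⟩
  invFun := fun ⟨f, hf⟩ => ⟨f ∘ e, by
    intro x r hr
    obtain ⟨y, hy1, hy2⟩ := hf (e x) r hr
    exact ⟨e.symm y, by simpa using ⟨hy1, hy2⟩⟩⟩
  left_inv := fun ⟨f, hf⟩ => by ext x <;> simp
  right_inv := fun ⟨f, hf⟩ => by ext x <;> simp

/-- codomain transport -/
def bpaEquivCod {m : ℕ} {α : Type} [Fintype α] {N N' : ℕ}
    (hN : Fintype.card α ≤ N) (hN' : Fintype.card α ≤ N') :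
    { f : α → Fin (m + 1) × Fin N // IsBPAG m N f } ≃
    { f : α → Fin (m + 1) × Fin N' // IsBPAG m N' f } where
  toFun := fun ⟨f, hf⟩ => ⟨fun x => ((f x).1, ⟨(f x).2, lt_of_lt_of_le (hf.rank_lt x) hN'⟩), by
    intro x r hr
    simp only [Fin.lt_def] at hr
    obtain ⟨y, hy1, hy2⟩ := hf x ⟨(r : ℕ), lt_trans hr (f x).2.isLt⟩ (by simpa [Fin.lt_def] using hr)
    exact ⟨y, hy1, by simp [hy2]⟩⟩
  invFun := fun ⟨f, hf⟩ => ⟨fun x => ((f x).1, ⟨(f x).2, lt_of_lt_of_le (hf.rank_lt x) hN⟩), by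
    intro x r hr
    simp only [Fin.lt_def] at hr
    obtain ⟨y, hy1, hy2⟩ := hf x ⟨(r : ℕ), lt_trans hr (f x).2.isLt⟩ (by simpa [Fin.lt_def] using hr)
    exact ⟨y, hy1, by simp [hy2]⟩⟩
  left_inv := fun ⟨f, hf⟩ => by ext x <;> simp
  right_inv := fun ⟨f, hf⟩ => by ext x <;> simp


section Decomp
variable {m N : ℕ} {α : Type} [Fintype α] [DecidableEq α]

/-- the gluing map -/
def glue (s : Σ A : Finset α,
    { g : {x // x ∈ A} → Fin 1 × Fin N // IsBPAG 0 N g } ×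
    { h : {x // x ∉ A} → Fin (m + 1) × Fin N // IsBPAG m N h }) :
    α → Fin (m + 2) × Fin N := fun x =>
  if hx : x ∈ s.1 then (Fin.last (m + 1), (s.2.1.1 ⟨x, hx⟩).2)
  else ((s.2.2.1 ⟨x, hx⟩).1.castSucc, (s.2.2.1 ⟨x, hx⟩).2)

theorem glue_isBPAG (s) : IsBPAG (m + 1) N (glue (α := α) s) := by
  obtain ⟨A, ⟨g, hg⟩, ⟨h, hh⟩⟩ := s
  intro x r hr
  by_cases hx : x ∈ A
  · simp only [glue, dif_pos hx] at hr ⊢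
    obtain ⟨y, hy1, hy2⟩ := hg ⟨x, hx⟩ r hr
    refine ⟨y.1, ?_, ?_⟩ <;> simp [glue, y.2, hy2]
  · simp only [glue, dif_neg hx] at hr ⊢
    obtain ⟨y, hy1, hy2⟩ := hh ⟨x, hx⟩ r hr
    refine ⟨y.1, ?_, ?_⟩ <;> simp [glue, y.2, hy1, hy2]

theorem glue_inj : Function.Injective (glue (m := m) (N := N) (α := α)) := by
  rintro ⟨A₁, ⟨g₁, hg₁⟩, ⟨h₁, hh₁⟩⟩ ⟨A₂, ⟨g₂, hg₂⟩, ⟨h₂, hh₂⟩⟩ heq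
  have hA : A₁ = A₂ := by
    ext x
    have := congrFun heq x
    constructor <;> intro hx
    · by_contra hx2
      simp only [glue, dif_pos hx, dif_neg hx2] at this
      exact absurd (congrArg Prod.fst this) (Fin.castSucc_lt_last _).ne'
    · by_contra hx2
      simp only [glue, dif_neg hx2, dif_pos hx] at this
      exact absurd (congrArg Prod.fst this) (Fin.castSucc_lt_last _).ne
  subst hA
  have hgeq : g₁ = g₂ := by
    funext x
    obtain ⟨xv, hxv⟩ := x
    have := congrFun heq xv
    simp only [glue, dif_pos hxv] at this
    injection this with e1 e2
    exact Prod.ext (Fin.ext (by omega)) e2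
  have hheq : h₁ = h₂ := by
    funext x
    obtain ⟨xv, hxv⟩ := x
    have := congrFun heq xv
    simp only [glue, dif_neg hxv] at this
    injection this with e1 e2
    exact Prod.ext (Fin.castSucc_injective _ e1) e2
  subst hgeq; subst hheq
  rfl

theorem glue_surj_on {f : α → Fin (m + 2) × Fin N} (hf : IsBPAG (m + 1) N f) :
    ∃ s, glue s = f := by
  refine ⟨⟨Finset.univ.filter (fun x => (f x).1 = Fin.last (m + 1)),
    ⟨fun x => (0, (f x.1).2), ?_⟩,
    ⟨fun x => ((f x.1).1.castPred (by
      have := x.2; simp only [Finset.mem_filter, Finset.mem_univ, true_and] at this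
      exact this), (f x.1).2), ?_⟩⟩, ?_⟩
  · intro x r hr
    obtain ⟨y, hy1, hy2⟩ := hf x.1 r hr
    have hx := x.2
    simp only [Finset.mem_filter, Finset.mem_univ, true_and] at hx
    refine ⟨⟨y, by simp [Finset.mem_filter, hy1, hx]⟩, rfl, hy2⟩
  · intro x r hr
    obtain ⟨y, hy1, hy2⟩ := hf x.1 r hr
    have hx := x.2
    simp only [Finset.mem_filter, Finset.mem_univ, true_and] at hx
    refine ⟨⟨y, by simp [Finset.mem_filter, hy1, hx]⟩, ?_, hy2⟩
    apply Fin.ext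
    simp [hy1]
  · funext x
    by_cases hx : x ∈ Finset.univ.filter (fun x => (f x).1 = Fin.last (m + 1))
    · have hx' := hx
      simp only [Finset.mem_filter, Finset.mem_univ, true_and] at hx'
      simp only [glue, dif_pos hx]
      exact Prod.ext_iff.mpr ⟨hx'.symm, rfl⟩
    · simp only [glue, dif_neg hx]
      exact Prod.ext_iff.mpr ⟨Fin.castSucc_castPred _ _, rfl⟩

noncomputable def decompEquiv :
    (Σ A : Finset α,
      { g : {x // x ∈ A} → Fin 1 × Fin N // IsBPAG 0 N g } ×
      { h : {x // x ∉ A} → Fin (m + 1) × Fin N // IsBPAG m N h }) ≃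
    { f : α → Fin (m + 2) × Fin N // IsBPAG (m + 1) N f } :=
  Equiv.ofBijective (fun s => ⟨glue s, glue_isBPAG s⟩)
    ⟨fun a b hab => glue_inj (congrArg Subtype.val hab),
     fun ⟨f, hf⟩ => by obtain ⟨s, hs⟩ := glue_surj_on hf; exact ⟨s, Subtype.ext hs⟩⟩

end Decomp


theorem finOne_eq (a b : Fin (0 + 1)) : a = b := by
  have ha := a.isLt; have hb := b.isLt
  exact Fin.ext (by omega)

section Fub
variable {N : ℕ} {α : Type} [Fintype α] [DecidableEq α]

theorem compl_card_lt {B : Finset α} (hB : B.Nonempty) (hN : Fintype.card α ≤ N)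
    {h : {x // x ∉ B} → Fin 1 × Fin N} (hh : IsBPAG 0 N h) (x : {x // x ∉ B}) :
    ((h x).2 : ℕ) + 1 < N := by
  have h1 := hh.rank_lt x
  have h2 : Fintype.card {x // x ∉ B} = Fintype.card α - B.card := by
    classical
    rw [Fintype.card_subtype_compl, Fintype.card_coe]
  have h3 : 1 ≤ B.card := hB.card_pos
  have h4 : B.card ≤ Fintype.card α := B.card_le_univ
  omega

def glue0 (hN : Fintype.card α ≤ N) (hNpos : 0 < N)
    (s : Σ B : {B : Finset α // B.Nonempty},
      { h : {x // x ∉ B.1} → Fin 1 × Fin N // IsBPAG 0 N h }) :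
    α → Fin 1 × Fin N := fun x =>
  if hx : x ∈ s.1.1 then (0, ⟨0, hNpos⟩)
  else (0, ⟨((s.2.1 ⟨x, hx⟩).2 : ℕ) + 1, compl_card_lt s.1.2 hN s.2.2 ⟨x, hx⟩⟩)

theorem glue0_isBPAG (hN : Fintype.card α ≤ N) (hNpos : 0 < N) (s) :
    IsBPAG 0 N (glue0 hN hNpos s) := by
  obtain ⟨⟨B, hB⟩, ⟨h, hh⟩⟩ := s
  intro x r hr
  by_cases hx : x ∈ B
  · simp only [glue0, dif_pos hx] at hr
    exact absurd hr (by simp [Fin.lt_def])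
  · simp only [glue0, dif_neg hx] at hr
    simp only [Fin.lt_def] at hr
    rcases Nat.eq_zero_or_pos (r : ℕ) with h0 | h0
    · obtain ⟨b, hb⟩ := hB
      refine ⟨b, finOne_eq _ _, ?_⟩
      simp only [glue0, dif_pos hb]
      exact Fin.ext (by simp; omega)
    · have hrN : (r : ℕ) - 1 < N := by omega
      obtain ⟨y, hy1, hy2⟩ := hh ⟨x, hx⟩ ⟨(r : ℕ) - 1, hrN⟩ (by simp [Fin.lt_def]; omega)
      refine ⟨y.1, finOne_eq _ _, ?_⟩
      simp only [glue0, dif_neg y.2]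
      apply Fin.ext
      simp only [Fin.ext_iff] at hy2
      simp [hy2]
      omega

theorem glue0_inj (hN : Fintype.card α ≤ N) (hNpos : 0 < N) :
    Function.Injective (glue0 (α := α) hN hNpos) := by
  rintro ⟨⟨B₁, hB₁⟩, ⟨h₁, hh₁⟩⟩ ⟨⟨B₂, hB₂⟩, ⟨h₂, hh₂⟩⟩ heq
  have hB : B₁ = B₂ := by
    ext x
    have := congrArg Prod.snd (congrFun heq x)
    constructor <;> intro hx
    · by_contra hx2
      simp only [glue0, dif_pos hx, dif_neg hx2] at this
      simp [Fin.ext_iff] at this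
    · by_contra hx2
      simp only [glue0, dif_neg hx2, dif_pos hx] at this
      simp [Fin.ext_iff] at this
  subst hB
  have hheq : h₁ = h₂ := by
    funext x
    obtain ⟨xv, hxv⟩ := x
    have := congrArg Prod.snd (congrFun heq xv)
    simp only [glue0, dif_neg hxv, Fin.ext_iff] at this
    refine Prod.ext (Fin.ext (by omega)) (Fin.ext (by omega))
  subst hheq
  rfl

theorem glue0_surj (hN : Fintype.card α ≤ N) (hNpos : 0 < N) [Nonempty α]
    {g : α → Fin (0 + 1) × Fin N} (hg : IsBPAG 0 N g) :
    ∃ s, glue0 hN hNpos s = g := by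
  classical
  have hBne : (Finset.univ.filter (fun x => ((g x).2 : ℕ) = 0)).Nonempty := by
    obtain ⟨x0⟩ := ‹Nonempty α›
    rcases Nat.eq_zero_or_pos ((g x0).2 : ℕ) with h0 | h0
    · exact ⟨x0, by simp [h0]⟩
    · obtain ⟨y, _, hy2⟩ := hg x0 ⟨0, hNpos⟩ (by simp [Fin.lt_def, h0])
      exact ⟨y, by simp [hy2]⟩
  set B : Finset α := Finset.univ.filter (fun x => ((g x).2 : ℕ) = 0) with hBdef
  have hmem : ∀ x, x ∈ B ↔ ((g x).2 : ℕ) = 0 := by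
    intro x; simp [hBdef]
  refine ⟨⟨⟨B, hBne⟩, ⟨fun x => (0, ⟨((g x.1).2 : ℕ) - 1, by
      have := (g x.1).2.isLt; omega⟩), ?_⟩⟩, ?_⟩
  · intro x r hr
    simp only [Fin.lt_def] at hr
    have hx := x.2
    rw [hmem] at hx
    have hrr : ((r : ℕ) + 1) < N := by
      have := (g x.1).2.isLt; simp at hr; omega
    obtain ⟨y, hy1, hy2⟩ := hg x.1 ⟨(r : ℕ) + 1, hrr⟩ (by
      simp only [Fin.lt_def] at hr ⊢; simp at hr ⊢; omega)
    have hyB : y ∉ B := by rw [hmem]; simp [Fin.ext_iff] at hy2; omega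
    refine ⟨⟨y, hyB⟩, finOne_eq _ _, ?_⟩
    apply Fin.ext
    simp only [Fin.ext_iff] at hy2
    simp [hy2]
  · funext x
    by_cases hx : x ∈ B
    · simp only [glue0, dif_pos hx]
      refine Prod.ext (finOne_eq _ _) (Fin.ext ?_)
      have := (hmem x).mp hx
      simp [this.symm]
    · simp only [glue0, dif_neg hx]
      refine Prod.ext (finOne_eq _ _) (Fin.ext ?_)
      have := (hmem x).not.mp hx
      simp
      omega

noncomputable def fubEquiv (hN : Fintype.card α ≤ N) (hNpos : 0 < N) [Nonempty α] :
    (Σ B : {B : Finset α // B.Nonempty},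
      { h : {x // x ∉ B.1} → Fin (0 + 1) × Fin N // IsBPAG 0 N h }) ≃
    { g : α → Fin (0 + 1) × Fin N // IsBPAG 0 N g } :=
  Equiv.ofBijective (fun s => ⟨glue0 hN hNpos s, glue0_isBPAG hN hNpos s⟩)
    ⟨fun a b hab => glue0_inj hN hNpos (congrArg Subtype.val hab),
     fun ⟨g, hg⟩ => by obtain ⟨s, hs⟩ := glue0_surj hN hNpos hg; exact ⟨s, Subtype.ext hs⟩⟩
end Fub


section Counting
open Finset

instance (m : ℕ) {α : Type} [Fintype α] (N : ℕ) (f : α → Fin (m + 1) × Fin N) :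
    Decidable (IsBPAG m N f) := by unfold IsBPAG; infer_instance

theorem bpa_eq_natCard (m ℓ : ℕ) :
    bpa m ℓ = Nat.card { f : Fin ℓ → Fin (m + 1) × Fin ℓ // IsBPAG m ℓ f } := by
  rw [bpa, ← Nat.card_eq_fintype_card]
  rfl

theorem bpaG_eq_bpa (m : ℕ) (α : Type) [Fintype α] (N : ℕ) (hN : Fintype.card α ≤ N) :
    bpaG m α N = bpa m (Fintype.card α) := by
  rw [bpaG, Nat.card_congr ((bpaEquivDom (m := m) (N := N) (Fintype.equivFin α)).trans
    (bpaEquivCod (α := Fin (Fintype.card α)) (N := N) (N' := Fintype.card α)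
      (by simpa using hN) (by simp))), bpa_eq_natCard]

theorem bpa_conv (m ℓ : ℕ) :
    bpa (m + 1) ℓ = ∑ j ∈ Finset.range (ℓ + 1), ℓ.choose j * (bpa 0 j * bpa m (ℓ - j)) := by
  classical
  rw [bpa_eq_natCard, ← Nat.card_congr (decompEquiv (m := m) (N := ℓ) (α := Fin ℓ)),
    Nat.card_eq_fintype_card, Fintype.card_sigma]
  have hterm : ∀ A : Finset (Fin ℓ),
      Fintype.card ({ g : {x // x ∈ A} → Fin 1 × Fin ℓ // IsBPAG 0 ℓ g } ×
        { h : {x // x ∉ A} → Fin (m + 1) × Fin ℓ // IsBPAG m ℓ h })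
      = bpa 0 A.card * bpa m (ℓ - A.card) := by
    intro A
    have hcA : Fintype.card {x // x ∈ A} = A.card := Fintype.card_coe A
    have hcC : Fintype.card {x // x ∉ A} = ℓ - A.card := by
      rw [Fintype.card_subtype_compl, hcA, Fintype.card_fin]
    rw [Fintype.card_prod, ← Nat.card_eq_fintype_card, ← Nat.card_eq_fintype_card]
    have e1 : Nat.card { g : {x // x ∈ A} → Fin 1 × Fin ℓ // IsBPAG 0 ℓ g }
        = bpa 0 A.card := by
      have := bpaG_eq_bpa 0 {x // x ∈ A} ℓ (by rw [hcA]; exact A.card_le_univ.trans (by simp))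
      rwa [bpaG, hcA] at this
    have e2 : Nat.card { h : {x // x ∉ A} → Fin (m + 1) × Fin ℓ // IsBPAG m ℓ h }
        = bpa m (ℓ - A.card) := by
      have := bpaG_eq_bpa m {x // x ∉ A} ℓ (by rw [hcC]; omega)
      rwa [bpaG, hcC] at this
    rw [e1, e2]
  rw [Finset.sum_congr rfl (fun A _ => hterm A)]
  have : ∑ A : Finset (Fin ℓ), bpa 0 A.card * bpa m (ℓ - A.card)
      = ∑ A ∈ (Finset.univ : Finset (Fin ℓ)).powerset, bpa 0 A.card * bpa m (ℓ - A.card) := by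
    rw [Finset.powerset_univ]
  rw [this, Finset.sum_powerset_apply_card (fun j => bpa 0 j * bpa m (ℓ - j))]
  simp [Finset.card_univ]

theorem bpa_zero_zero : bpa 0 0 = 1 := by
  rw [bpa, Fintype.card_eq_one_iff]
  refine ⟨⟨fun x => x.elim0, fun x => x.elim0⟩, ?_⟩
  rintro ⟨f, hf⟩
  apply Subtype.ext
  funext x
  exact x.elim0

theorem two_bpa0 (n : ℕ) :
    2 * bpa 0 (n + 1) = ∑ j ∈ Finset.range (n + 2), (n + 1).choose j * bpa 0 (n + 1 - j) := by
  classical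
  have key : bpa 0 (n + 1)
      = ∑ B ∈ Finset.univ.filter (fun B : Finset (Fin (n + 1)) => B.Nonempty),
          bpa 0 (n + 1 - B.card) := by
    rw [bpa_eq_natCard,
      ← Nat.card_congr (fubEquiv (α := Fin (n + 1)) (N := n + 1) (by simp) (by omega)),
      Nat.card_eq_fintype_card, Fintype.card_sigma]
    have hterm : ∀ B : {B : Finset (Fin (n + 1)) // B.Nonempty},
        Fintype.card { h : {x // x ∉ B.1} → Fin (0 + 1) × Fin (n + 1) // IsBPAG 0 (n + 1) h }
        = bpa 0 (n + 1 - B.1.card) := by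
      intro B
      have hcC : Fintype.card {x // x ∉ B.1} = n + 1 - B.1.card := by
        rw [Fintype.card_subtype_compl, Fintype.card_coe, Fintype.card_fin]
      rw [← Nat.card_eq_fintype_card]
      have := bpaG_eq_bpa 0 {x // x ∉ B.1} (n + 1) (by rw [hcC]; omega)
      rwa [bpaG, hcC] at this
    rw [Finset.sum_congr rfl (fun B _ => hterm B)]
    refine Finset.sum_bij (fun B _ => B.1) ?_ ?_ ?_ ?_
    · intro B _
      simp [B.2]
    · intro a _ b _ hab
      exact Subtype.ext hab
    · intro b hb
      simp only [Finset.mem_filter] at hb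
      exact ⟨⟨b, hb.2⟩, Finset.mem_univ _, rfl⟩
    · intro B _
      rfl
  have split := Finset.sum_filter_add_sum_filter_not Finset.univ
    (fun B : Finset (Fin (n + 1)) => B.Nonempty) (fun B => bpa 0 (n + 1 - B.card))
  have hempty : Finset.univ.filter (fun B : Finset (Fin (n + 1)) => ¬ B.Nonempty)
      = {∅} := by
    ext B
    simp [Finset.not_nonempty_iff_eq_empty]
  rw [hempty, Finset.sum_singleton] at split
  have hall : ∑ B : Finset (Fin (n + 1)), bpa 0 (n + 1 - B.card)
      = ∑ j ∈ Finset.range (n + 2), (n + 1).choose j * bpa 0 (n + 1 - j) := by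
    rw [show (Finset.univ : Finset (Finset (Fin (n + 1)))) =
      (Finset.univ : Finset (Fin (n + 1))).powerset from (Finset.powerset_univ).symm,
      Finset.sum_powerset_apply_card (fun j => bpa 0 (n + 1 - j))]
    simp [Finset.card_univ]
  rw [← hall, ← split, ← key]
  simp
  omega

end Counting

namespace BPAPS
open PowerSeries

noncomputable def F : PowerSeries ℚ := PowerSeries.mk fun n => (bpa 0 n : ℚ) / n.factorial
noncomputable def B (m : ℕ) : PowerSeries ℚ := PowerSeries.mk fun n => (bpa m n : ℚ) / n.factorial

theorem coeff_F (n : ℕ) : (coeff n) F = (bpa 0 n : ℚ) / n.factorial := coeff_mk _ _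
theorem coeff_B (m n : ℕ) : (coeff n) (B m) = (bpa m n : ℚ) / n.factorial := coeff_mk _ _

theorem fact_ne (n : ℕ) : ((n.factorial : ℚ)) ≠ 0 :=
  Nat.cast_ne_zero.mpr n.factorial_ne_zero

theorem choose_term (n j : ℕ) (hj : j ≤ n) (a b : ℚ) :
    (n.choose j : ℚ) * (a * b) / n.factorial = (a / j.factorial) * (b / (n - j).factorial) := by
  rw [Nat.cast_choose ℚ hj]
  have h1 := fact_ne n
  have h2 := fact_ne j
  have h3 := fact_ne (n - j)
  field_simp

theorem B_succ (m : ℕ) : B (m + 1) = F * B m := by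
  ext n
  rw [coeff_B, coeff_mul, Finset.Nat.sum_antidiagonal_eq_sum_range_succ_mk]
  rw [bpa_conv]
  rw [Nat.cast_sum, Finset.sum_div]
  refine Finset.sum_congr rfl fun j hj => ?_
  rw [Finset.mem_range] at hj
  rw [coeff_F, coeff_B]
  push_cast
  exact choose_term n j (by omega) _ _

theorem B_eq_pow (m : ℕ) : B m = F ^ (m + 1) := by
  induction m with
  | zero => rw [pow_one]; rfl
  | succ k ih => rw [B_succ, ih]; ring

theorem F_exp : 2 * F = PowerSeries.exp ℚ * F + 1 := by
  ext n
  have h2 : (coeff n) (2 * F) = 2 * (coeff n) F := by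
    rw [two_mul, map_add, two_mul]
  rw [map_add, h2, coeff_mul, Finset.Nat.sum_antidiagonal_eq_sum_range_succ_mk, coeff_F]
  cases n with
  | zero =>
    simp [coeff_exp, coeff_F, bpa_zero_zero, coeff_one]
    norm_num
  | succ t =>
    rw [coeff_one, if_neg (Nat.succ_ne_zero t), add_zero]
    have key := two_bpa0 t
    have : 2 * ((bpa 0 (t + 1) : ℚ) / (t + 1).factorial)
        = (2 * bpa 0 (t + 1) : ℕ) / ((t + 1).factorial : ℚ) := by push_cast; ring
    rw [this, key]
    rw [Nat.cast_sum, Finset.sum_div]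
    refine Finset.sum_congr rfl fun j hj => ?_
    rw [Finset.mem_range] at hj
    rw [coeff_exp, coeff_F]
    have := choose_term (t + 1) j (by omega) 1 (bpa 0 (t + 1 - j))
    push_cast
    push_cast at this
    rw [← this]
    ring

theorem d_exp : d⁄dX ℚ (exp ℚ) = exp ℚ := by
  ext n
  rw [coeff_derivative, coeff_exp, coeff_exp]
  have h1 : ((n + 1).factorial : ℚ) = (n + 1) * n.factorial := by
    rw [Nat.factorial_succ]; push_cast; ring
  simp only [Algebra.algebraMap_self, RingHom.id_apply]
  rw [h1]
  have := fact_ne n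
  field_simp

theorem two_C : (2 : ℚ⟦X⟧) = PowerSeries.C (R := ℚ) 2 := by
  exact (map_ofNat (PowerSeries.C (R := ℚ)) 2).symm

theorem F_unit : F * (2 - exp ℚ) = 1 := by
  have : (2 - exp ℚ) * F = 1 := by
    rw [sub_mul, F_exp]; ring
  rw [mul_comm]; exact this

theorem F_ode : d⁄dX ℚ F = (2 * F - 1) * F := by
  have h1 : (2 - exp ℚ) * F = 1 := by rw [sub_mul, F_exp]; ring
  have h2 : exp ℚ * F = 2 * F - 1 := by rw [F_exp]; ring
  have h3 := congrArg (d⁄dX ℚ) h1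
  rw [Derivation.leibniz, Derivation.map_one_eq_zero] at h3
  have hd2 : d⁄dX ℚ (2 : ℚ⟦X⟧) = 0 := by rw [two_C, derivative_C]
  rw [smul_eq_mul, smul_eq_mul, map_sub, hd2, d_exp, zero_sub] at h3
  -- h3 : (2 - exp) * dF + F * (- exp) = 0
  have h4 : (2 - exp ℚ) * (d⁄dX ℚ F) = exp ℚ * F := by
    have : F * -exp ℚ = -(exp ℚ * F) := by ring
    rw [this] at h3
    linear_combination h3
  calc d⁄dX ℚ F = (F * (2 - exp ℚ)) * d⁄dX ℚ F := by rw [F_unit, one_mul]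
    _ = F * ((2 - exp ℚ) * d⁄dX ℚ F) := by ring
    _ = F * (exp ℚ * F) := by rw [h4]
    _ = (2 * F - 1) * F := by rw [h2]; ring

theorem key_ps (k : ℕ) :
    PowerSeries.C (R := ℚ) (2 * (k + 1)) * F ^ (k + 1 + 1)
      = d⁄dX ℚ (F ^ (k + 1)) + PowerSeries.C (R := ℚ) (k + 1) * F ^ (k + 1) := by
  rw [Derivation.leibniz_pow, F_ode]
  have hn : ((k + 1) • (F ^ (k + 1 - 1) • ((2 * F - 1) * F)) : ℚ⟦X⟧)
      = ((k + 1 : ℕ) : ℚ⟦X⟧) * (F ^ k * ((2 * F - 1) * F)) := by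
    rw [smul_eq_mul, nsmul_eq_mul]; norm_num
  rw [hn]
  have hc1 : PowerSeries.C (R := ℚ) (2 * (k + 1)) = 2 * ((k + 1 : ℕ) : ℚ⟦X⟧) := by
    have e : ((2 : ℚ) * ((k : ℚ) + 1)) = ((2 * (k + 1) : ℕ) : ℚ) := by push_cast; ring
    rw [e, map_natCast]
    push_cast
    ring
  have hc2 : PowerSeries.C (R := ℚ) ((k : ℚ) + 1) = ((k + 1 : ℕ) : ℚ⟦X⟧) := by
    have e : ((k : ℚ) + 1) = ((k + 1 : ℕ) : ℚ) := by push_cast; ring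
    rw [e, map_natCast]
  rw [hc1, hc2]
  ring

theorem main_q (k ℓ : ℕ) :
    (2 * (k + 1) * bpa (k + 1) ℓ : ℚ) = bpa k (ℓ + 1) + (k + 1) * bpa k ℓ := by
  have h := congrArg (coeff ℓ) (key_ps k)
  rw [← B_eq_pow, ← B_eq_pow, coeff_C_mul, map_add, coeff_C_mul, coeff_derivative,
    coeff_B, coeff_B, coeff_B] at h
  have hfact : ((ℓ + 1).factorial : ℚ) = (ℓ + 1) * ℓ.factorial := by
    rw [Nat.factorial_succ]; push_cast; ring
  rw [hfact] at h
  have h1 := fact_ne ℓ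
  have h2 : ((ℓ : ℚ) + 1) ≠ 0 := by positivity
  field_simp at h
  have hD : (((ℓ : ℚ) + 1) * ℓ.factorial * ℓ.factorial) ≠ 0 := by positivity
  apply mul_right_cancel₀ hD
  push_cast at h ⊢
  linear_combination (((ℓ : ℚ) + 1) * ℓ.factorial * ℓ.factorial) * h

end BPAPS

/-- For every `m ≥ 1` and every `ℓ ≥ 0`,
`2 · m · r_{m,ℓ} = r_{m-1, ℓ+1} + m · r_{m-1, ℓ}`. -/
theorem bpa_recurrence (m ℓ : ℕ) (hm : 1 ≤ m) :
    2 * m * bpa m ℓ = bpa (m - 1) (ℓ + 1) + m * bpa (m - 1) ℓ := by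
  obtain ⟨k, rfl⟩ := Nat.exists_eq_add_of_le hm
  have h := BPAPS.main_q k ℓ
  have hmk : 1 + k - 1 = k := by omega
  rw [hmk, Nat.add_comm 1 k]
  exact_mod_cast h
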